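/- For all 0 ≤ S ≤ T and all x, y ∈ I one has 0 ≤ Ū^{N,0}_{S,T,x,y}, and sup_{x,y∈I} Ū^{N,0}_{S,T,x,y} ≤ C·(N^{−1} + N^{−1}(T−S)^{−1/2}) for a constant C depending only on ᾱ (hence only on m, c, C₀). -/

import Mathlib

open scoped BigOperators

/-- Nearest-neighbor Neumann generator `ℒ̄` with diffusivity `a`, acting on `ℤ`-indexed
functions, on the interval `I = {0,…,N}`. -/
noncomputable def LbarAct (N : ℕ) (a : ℝ) (φ : ℤ → ℝ) (x : ℤ) : ℝ :=
  if x = 0 then a * (N : ℝ) ^ 2 / 2 * (φ 1 - φ 0)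
  else if x = (N : ℤ) then a * (N : ℝ) ^ 2 / 2 * (φ ((N : ℤ) - 1) - φ (N : ℤ))
  else a * (N : ℝ) ^ 2 / 2 * (φ (x + 1) + φ (x - 1) - 2 * φ x)

/-- Matrix of `ℒ̄` on `I = {0,…,N}`. -/
noncomputable def LbarMat (N : ℕ) (a : ℝ) : Matrix (Fin (N + 1)) (Fin (N + 1)) ℝ :=
  Matrix.of fun x y =>
    LbarAct N a (fun z => if z = ((y : ℕ) : ℤ) then 1 else 0) ((x : ℕ) : ℤ)

/-- Nearest-neighbor Neumann heat kernel `Ū^{N,0}_{S,T,x,y} = (exp((T−S)ℒ̄))_{x,y}`,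
indexed by integers (zero off `I × I`). -/
noncomputable def kerBar0 (N : ℕ) (a : ℝ) (S T : ℝ) (x y : ℤ) : ℝ :=
  if hxy : 0 ≤ x ∧ x ≤ (N : ℤ) ∧ 0 ≤ y ∧ y ≤ (N : ℤ) then
    NormedSpace.exp ((T - S) • LbarMat N a) ⟨x.toNat, by omega⟩ ⟨y.toNat, by omega⟩
  else 0

namespace NashAux

open Real Matrix

/-! ### Trigonometric sum lemmas -/

lemma sum_cos_tel (n : ℕ) (α : ℝ) :
    2 * Real.sin (α/2) * ∑ x ∈ Finset.range n, Real.cos (((x:ℝ) + 1/2) * α)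
      = Real.sin (n * α) := by
  induction n with
  | zero => simp
  | succ k ih =>
    rw [Finset.sum_range_succ, mul_add, ih]
    have h1 : ((k:ℝ)+1) * α = (((k:ℝ) + 1/2) * α) + α/2 := by ring
    have h2 : (k:ℝ) * α = (((k:ℝ) + 1/2) * α) - α/2 := by ring
    push_cast
    rw [h1, h2, Real.sin_add, Real.sin_sub]
    ring

lemma sum_cos_int (n : ℕ) (hn : 0 < n) (m : ℤ) (hm : m ≠ 0) (hmn : m.natAbs < 2*n) :
    ∑ x ∈ Finset.range n, Real.cos (((x:ℝ) + 1/2) * ((m:ℝ) * (π/n))) = 0 := by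
  set M : ℕ := m.natAbs with hM
  have hcongr : ∀ x : ℕ, Real.cos (((x:ℝ) + 1/2) * ((m:ℝ) * (π/n)))
      = Real.cos (((x:ℝ) + 1/2) * ((M:ℝ) * (π/n))) := by
    intro x
    rcases le_or_gt 0 m with h | h
    · congr 3
      rw [hM, Nat.cast_natAbs, Int.cast_abs, abs_of_nonneg (by exact_mod_cast h)]
    · have hMm : (M:ℝ) = -(m:ℝ) := by
        rw [hM, Nat.cast_natAbs, Int.cast_abs, abs_of_neg (by exact_mod_cast h)]
      rw [hMm]
      rw [show ((x:ℝ) + 1/2) * (-(m:ℝ) * (π/n)) = -(((x:ℝ) + 1/2) * ((m:ℝ) * (π/n))) by ring]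
      rw [Real.cos_neg]
  rw [Finset.sum_congr rfl (fun x _ => hcongr x)]
  have hM0 : 0 < M := Int.natAbs_pos.mpr hm
  have hα : (0:ℝ) < (M:ℝ) * (π/n) / 2 := by
    have : (0:ℝ) < π / n := by positivity
    positivity
  have hα2 : (M:ℝ) * (π/n) / 2 < π := by
    have h1 : (M:ℝ) < 2*n := by exact_mod_cast hmn
    have hnp : (0:ℝ) < n := by exact_mod_cast hn
    rw [div_lt_iff₀ (by norm_num : (0:ℝ) < 2)]
    calc (M:ℝ) * (π/n) < (2*(n:ℝ)) * (π/n) := by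
          apply mul_lt_mul_of_pos_right h1; positivity
      _ = π * 2 := by field_simp
  have hsin : Real.sin ((M:ℝ) * (π/n) / 2) ≠ 0 :=
    ne_of_gt (Real.sin_pos_of_pos_of_lt_pi hα hα2)
  have htel := sum_cos_tel n ((M:ℝ) * (π/n))
  have hnα : (n:ℝ) * ((M:ℝ) * (π/n)) = M * π := by
    field_simp
  rw [hnα, Real.sin_nat_mul_pi] at htel
  have h2 : (2:ℝ) * Real.sin ((M:ℝ) * (π/n)/2) ≠ 0 := by
    simpa using hsin
  exact (mul_eq_zero.mp htel).resolve_left h2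

lemma cos_mul_cos (u v : ℝ) :
    Real.cos u * Real.cos v = (Real.cos (u+v) + Real.cos (u-v))/2 := by
  rw [Real.cos_add, Real.cos_sub]; ring

lemma sum_orth (n : ℕ) (hn : 0 < n) (j k : ℕ) (hj : j < n) (hk : k < n) :
    ∑ x ∈ Finset.range n,
      Real.cos (((x:ℝ) + 1/2) * ((j:ℝ) * (π/n))) * Real.cos (((x:ℝ) + 1/2) * ((k:ℝ) * (π/n)))
    = if j = k then (if j = 0 then (n:ℝ) else (n:ℝ)/2) else 0 := by
  have hterm : ∀ x : ℕ,
      Real.cos (((x:ℝ) + 1/2) * ((j:ℝ) * (π/n))) * Real.cos (((x:ℝ) + 1/2) * ((k:ℝ) * (π/n)))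
      = (Real.cos (((x:ℝ) + 1/2) * ((Int.cast ((j:ℤ)+(k:ℤ)) : ℝ) * (π/n)))
         + Real.cos (((x:ℝ) + 1/2) * ((Int.cast ((j:ℤ)-(k:ℤ)) : ℝ) * (π/n))))/2 := by
    intro x
    rw [cos_mul_cos]
    congr 3 <;> push_cast <;> ring
  rw [Finset.sum_congr rfl (fun x _ => hterm x), ← Finset.sum_div,
    Finset.sum_add_distrib]
  have hzero : ∑ x ∈ Finset.range n,
      Real.cos (((x:ℝ) + 1/2) * ((((0:ℤ)):ℝ) * (π/n))) = (n:ℝ) := by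
    simp
  by_cases hjk : j = k
  · subst hjk
    by_cases hj0 : j = 0
    · subst hj0
      simpa using hzero
    · have hA : ∑ x ∈ Finset.range n,
          Real.cos (((x:ℝ) + 1/2) * ((Int.cast ((j:ℤ)+(j:ℤ)) : ℝ) * (π/n))) = 0 := by
        exact sum_cos_int n hn ((j:ℤ)+(j:ℤ)) (by omega) (by omega)
      have hB : ∑ x ∈ Finset.range n,
          Real.cos (((x:ℝ) + 1/2) * ((Int.cast ((j:ℤ)-(j:ℤ)) : ℝ) * (π/n))) = (n:ℝ) := by
        simpa using hzero
      rw [hA, hB]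
      simp [hj0]
  · have hA : ∑ x ∈ Finset.range n,
        Real.cos (((x:ℝ) + 1/2) * ((Int.cast ((j:ℤ)+(k:ℤ)) : ℝ) * (π/n))) = 0 := by
      exact sum_cos_int n hn ((j:ℤ)+(k:ℤ)) (by omega) (by omega)
    have hB : ∑ x ∈ Finset.range n,
        Real.cos (((x:ℝ) + 1/2) * ((Int.cast ((j:ℤ)-(k:ℤ)) : ℝ) * (π/n))) = 0 := by
      exact sum_cos_int n hn ((j:ℤ)-(k:ℤ)) (by omega) (by omega)
    rw [hA, hB]
    simp [hjk]

/-! ### The orthogonal eigenbasis -/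

noncomputable def gcoef (N : ℕ) (j : Fin (N+1)) : ℝ :=
  if (j:ℕ) = 0 then Real.sqrt (1/((N:ℝ)+1)) else Real.sqrt (2/((N:ℝ)+1))

noncomputable def Pmat (N : ℕ) : Matrix (Fin (N+1)) (Fin (N+1)) ℝ :=
  Matrix.of fun x j => gcoef N j *
    Real.cos ((((x:ℕ):ℝ) + 1/2) * (((j:ℕ):ℝ) * (π/(((N+1:ℕ)):ℝ))))

noncomputable def lam (N : ℕ) (a : ℝ) (j : Fin (N+1)) : ℝ :=
  -(a*(N:ℝ)^2) * (1 - Real.cos (((j:ℕ):ℝ) * (π/(((N+1:ℕ)):ℝ))))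

lemma Pmat_orth (N : ℕ) : (Pmat N)ᵀ * Pmat N = 1 := by
  ext j k
  rw [Matrix.mul_apply, Matrix.one_apply]
  have key : ∑ x : Fin (N+1), (Pmat N)ᵀ j x * Pmat N x k
      = gcoef N j * gcoef N k * ∑ x ∈ Finset.range (N+1),
          Real.cos (((x:ℝ) + 1/2) * (((j:ℕ):ℝ) * (π/((N+1:ℕ):ℝ))))
          * Real.cos (((x:ℝ) + 1/2) * (((k:ℕ):ℝ) * (π/((N+1:ℕ):ℝ)))) := by
    rw [Finset.mul_sum, ← Fin.sum_univ_eq_sum_range]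
    apply Finset.sum_congr rfl
    intro x _
    simp only [Matrix.transpose_apply, Pmat, Matrix.of_apply]
    ring
  rw [key, sum_orth (N+1) (by omega) (j:ℕ) (k:ℕ) j.isLt k.isLt]
  by_cases hjk : j = k
  · subst hjk
    simp only [if_pos rfl, if_pos (Eq.refl j)]
    by_cases hj0 : (j:ℕ) = 0
    · rw [if_pos hj0]
      simp only [gcoef, if_pos hj0]
      rw [← Real.sqrt_mul_self (by positivity : (0:ℝ) ≤ Real.sqrt (1/((N:ℝ)+1))) ]
      rw [Real.mul_self_sqrt (by positivity)]
      push_cast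
      field_simp
      rw [Real.sq_sqrt (by positivity)]; field_simp
    · rw [if_neg hj0]
      simp only [gcoef, if_neg hj0]
      rw [← Real.sqrt_mul_self (by positivity : (0:ℝ) ≤ Real.sqrt (2/((N:ℝ)+1)))]
      rw [Real.mul_self_sqrt (by positivity)]
      push_cast
      field_simp
      rw [Real.sq_sqrt (by positivity)]; field_simp
  · have : (j:ℕ) ≠ (k:ℕ) := fun h => hjk (Fin.ext h)
    rw [if_neg this, if_neg hjk, mul_zero]

lemma sum_delta (N : ℕ) (c : Fin (N+1)) (z : ℤ) (hz : z = ((c:ℕ):ℤ)) (f : Fin (N+1) → ℝ) :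
    ∑ y : Fin (N+1), (if z = ((y:ℕ):ℤ) then (1:ℝ) else 0) * f y = f c := by
  subst hz
  have h : ∀ y : Fin (N+1),
      (if ((c:ℕ):ℤ) = ((y:ℕ):ℤ) then (1:ℝ) else 0) * f y = if c = y then f y else 0 := by
    intro y
    by_cases h : c = y
    · subst h; simp
    · rw [if_neg h, if_neg (fun hh => h (Fin.ext (by exact_mod_cast hh))), zero_mul]
  rw [Finset.sum_congr rfl (fun y _ => h y), Finset.sum_ite_eq]
  simp

lemma trig_half (u B : ℝ) (h : u = B/2) :
    Real.cos (u + B) = 2*Real.cos u*Real.cos B - Real.cos u := by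
  have h1 : Real.cos (u+B) + Real.cos (u-B) = 2*Real.cos u*Real.cos B := by
    rw [Real.cos_add, Real.cos_sub]; ring
  have h2 : Real.cos (u-B) = Real.cos u := by
    rw [show u - B = -u by rw [h]; ring, Real.cos_neg]
  linarith

lemma trig_int (w B : ℝ) : Real.cos (w+B) + Real.cos (w-B) = 2*Real.cos w*Real.cos B := by
  rw [Real.cos_add, Real.cos_sub]; ring

lemma trig_top (w B : ℝ) (j : ℕ) (h : w = (j:ℝ)*π - B/2) :
    Real.cos (w - B) = 2*Real.cos w*Real.cos B - Real.cos w := by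
  have h1 : Real.cos (w+B) = Real.cos w := by
    have e1 : w + B = (j:ℝ)*π + B/2 := by rw [h]; ring
    rw [e1, h, Real.cos_add, Real.cos_sub, Real.sin_nat_mul_pi]
    ring
  have := trig_int w B
  linarith

lemma Lmul (N : ℕ) (a : ℝ) (hN : 2 ≤ N) :
    LbarMat N a * Pmat N = Pmat N * Matrix.diagonal (lam N a) := by
  have hNR : ((N:ℝ)+1) ≠ 0 := by positivity
  ext x j
  rw [Matrix.mul_apply, Matrix.mul_diagonal]
  by_cases hx0 : (x:ℕ) = 0
  · -- x = 0 case
    have h1lt : 1 < N + 1 := by omega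
    have h0lt : 0 < N + 1 := by omega
    have hterm : ∀ y : Fin (N+1), LbarMat N a x y * Pmat N y j
        = (a * (N:ℝ)^2/2) * ((if (1:ℤ) = ((y:ℕ):ℤ) then (1:ℝ) else 0) * Pmat N y j)
          - (a * (N:ℝ)^2/2) * ((if (0:ℤ) = ((y:ℕ):ℤ) then (1:ℝ) else 0) * Pmat N y j) := by
      intro y
      simp only [LbarMat, LbarAct, Matrix.of_apply]
      rw [if_pos (show ((x:ℕ):ℤ) = 0 by exact_mod_cast hx0)]
      ring
    rw [Finset.sum_congr rfl (fun y _ => hterm y), Finset.sum_sub_distrib,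
      ← Finset.mul_sum, ← Finset.mul_sum,
      sum_delta N ⟨1, h1lt⟩ 1 (by norm_num) (fun y => Pmat N y j),
      sum_delta N ⟨0, h0lt⟩ 0 (by norm_num) (fun y => Pmat N y j)]
    rw [show x = ⟨0, h0lt⟩ from Fin.ext hx0]
    simp only [Pmat, Matrix.of_apply, lam]
    set b : ℝ := ((j:ℕ):ℝ) * (π/(((N+1:ℕ)):ℝ)) with hb
    have e0 : (((⟨0, h0lt⟩ : Fin (N+1)):ℕ):ℝ) = 0 := by norm_num
    have e1 : (((⟨1, h1lt⟩ : Fin (N+1)):ℕ):ℝ) = 1 := by norm_num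
    rw [e0, e1]
    have hkey : Real.cos (((1:ℝ)+1/2)*b) = 2*Real.cos (((0:ℝ)+1/2)*b)*Real.cos b
        - Real.cos (((0:ℝ)+1/2)*b) := by
      have h := trig_half (((0:ℝ)+1/2)*b) b (by ring)
      rw [show ((1:ℝ)+1/2)*b = ((0:ℝ)+1/2)*b + b by ring]
      exact h
    rw [hkey]
    ring
  by_cases hxN : (x:ℕ) = N
  · -- x = N case
    have hm1lt : N - 1 < N + 1 := by omega
    have hNlt : N < N + 1 := by omega
    have hterm : ∀ y : Fin (N+1), LbarMat N a x y * Pmat N y j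
        = (a * (N:ℝ)^2/2) * ((if (N:ℤ)-1 = ((y:ℕ):ℤ) then (1:ℝ) else 0) * Pmat N y j)
          - (a * (N:ℝ)^2/2) * ((if (N:ℤ) = ((y:ℕ):ℤ) then (1:ℝ) else 0) * Pmat N y j) := by
      intro y
      simp only [LbarMat, LbarAct, Matrix.of_apply]
      rw [if_neg (show ¬ ((x:ℕ):ℤ) = 0 by omega),
        if_pos (show ((x:ℕ):ℤ) = (N:ℤ) by omega)]
      ring
    rw [Finset.sum_congr rfl (fun y _ => hterm y), Finset.sum_sub_distrib,
      ← Finset.mul_sum, ← Finset.mul_sum,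
      sum_delta N ⟨N-1, hm1lt⟩ ((N:ℤ)-1) (by push_cast [Nat.cast_sub (show 1 ≤ N by omega)]; ring)
        (fun y => Pmat N y j),
      sum_delta N ⟨N, hNlt⟩ (N:ℤ) (by norm_num) (fun y => Pmat N y j)]
    rw [show x = ⟨N, hNlt⟩ from Fin.ext hxN]
    simp only [Pmat, Matrix.of_apply, lam]
    set b : ℝ := ((j:ℕ):ℝ) * (π/(((N+1:ℕ)):ℝ)) with hb
    have hb' : b = ((j:ℕ):ℝ) * (π/((N:ℝ)+1)) := by rw [hb]; push_cast; ring
    have em1 : (((⟨N-1, hm1lt⟩ : Fin (N+1)):ℕ):ℝ) = (N:ℝ)-1 := by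
      simp [Nat.cast_sub (show 1 ≤ N by omega)]
    have eN : (((⟨N, hNlt⟩ : Fin (N+1)):ℕ):ℝ) = (N:ℝ) := by norm_num
    rw [em1, eN]
    have hkey : Real.cos (((N:ℝ)-1+1/2)*b) = 2*Real.cos (((N:ℝ)+1/2)*b)*Real.cos b
        - Real.cos (((N:ℝ)+1/2)*b) := by
      have h := trig_top (((N:ℝ)+1/2)*b) b (j:ℕ)
        (by rw [hb']; field_simp; ring)
      rw [show ((N:ℝ)-1+1/2)*b = ((N:ℝ)+1/2)*b - b by ring]
      exact h
    rw [hkey]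
    ring
  · -- interior case
    have hv1 : 1 ≤ (x:ℕ) := by omega
    have hvN : (x:ℕ) < N := by omega
    have hplt : (x:ℕ)+1 < N + 1 := by omega
    have hmlt : (x:ℕ)-1 < N + 1 := by omega
    have hterm : ∀ y : Fin (N+1), LbarMat N a x y * Pmat N y j
        = ((a * (N:ℝ)^2/2) * ((if ((x:ℕ):ℤ)+1 = ((y:ℕ):ℤ) then (1:ℝ) else 0) * Pmat N y j)
          + (a * (N:ℝ)^2/2) * ((if ((x:ℕ):ℤ)-1 = ((y:ℕ):ℤ) then (1:ℝ) else 0) * Pmat N y j))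
          - (2*(a * (N:ℝ)^2/2)) * ((if ((x:ℕ):ℤ) = ((y:ℕ):ℤ) then (1:ℝ) else 0) * Pmat N y j) := by
      intro y
      simp only [LbarMat, LbarAct, Matrix.of_apply]
      rw [if_neg (show ¬ ((x:ℕ):ℤ) = 0 by omega),
        if_neg (show ¬ ((x:ℕ):ℤ) = (N:ℤ) by omega)]
      ring
    rw [Finset.sum_congr rfl (fun y _ => hterm y), Finset.sum_sub_distrib,
      Finset.sum_add_distrib, ← Finset.mul_sum, ← Finset.mul_sum, ← Finset.mul_sum,
      sum_delta N ⟨(x:ℕ)+1, hplt⟩ (((x:ℕ):ℤ)+1) (by push_cast; ring) (fun y => Pmat N y j),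
      sum_delta N ⟨(x:ℕ)-1, hmlt⟩ (((x:ℕ):ℤ)-1)
        (by push_cast [Nat.cast_sub hv1]; ring) (fun y => Pmat N y j),
      sum_delta N x ((x:ℕ):ℤ) rfl (fun y => Pmat N y j)]
    simp only [Pmat, Matrix.of_apply, lam]
    set b : ℝ := ((j:ℕ):ℝ) * (π/(((N+1:ℕ)):ℝ)) with hb
    have ep : (((⟨(x:ℕ)+1, hplt⟩ : Fin (N+1)):ℕ):ℝ) = ((x:ℕ):ℝ)+1 := by push_cast; ring
    have em : (((⟨(x:ℕ)-1, hmlt⟩ : Fin (N+1)):ℕ):ℝ) = ((x:ℕ):ℝ)-1 := by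
      simp [Nat.cast_sub hv1]
    rw [ep, em]
    have hkey : Real.cos ((((x:ℕ):ℝ)+1+1/2)*b) + Real.cos ((((x:ℕ):ℝ)-1+1/2)*b)
        = 2*Real.cos ((((x:ℕ):ℝ)+1/2)*b)*Real.cos b := by
      have h := trig_int ((((x:ℕ):ℝ)+1/2)*b) b
      rw [show (((x:ℕ):ℝ)+1+1/2)*b = (((x:ℕ):ℝ)+1/2)*b + b by ring,
        show (((x:ℕ):ℝ)-1+1/2)*b = (((x:ℕ):ℝ)+1/2)*b - b by ring]
      exact h
    have hkey' : Real.cos ((((x:ℕ):ℝ)+1+1/2)*b)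
        = 2*Real.cos ((((x:ℕ):ℝ)+1/2)*b)*Real.cos b - Real.cos ((((x:ℕ):ℝ)-1+1/2)*b) := by
      linarith
    rw [hkey']
    ring

/-! ### Spectral representation of the heat kernel -/

lemma exp_entries (N : ℕ) (a t : ℝ) (hN : 2 ≤ N) (x y : Fin (N+1)) :
    NormedSpace.exp (t • LbarMat N a) x y
      = ∑ k : Fin (N+1), Real.exp (t * lam N a k) * (Pmat N x k * Pmat N y k) := by
  have hPP : (Pmat N)ᵀ * Pmat N = 1 := Pmat_orth N
  have hPPt : Pmat N * (Pmat N)ᵀ = 1 := mul_eq_one_comm.mp hPP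
  have hunit : IsUnit (Pmat N) := (Matrix.isUnit_iff_isUnit_det _).mpr (Matrix.isUnit_det_of_right_inverse hPPt)
  have hinv : (Pmat N)⁻¹ = (Pmat N)ᵀ := Matrix.inv_eq_right_inv hPPt
  have hD : (Matrix.diagonal fun k => t * lam N a k) = t • Matrix.diagonal (lam N a) := by
    rw [← Matrix.diagonal_smul]
    congr 1
  have hL : t • LbarMat N a
      = Pmat N * Matrix.diagonal (fun k => t * lam N a k) * (Pmat N)⁻¹ := by
    rw [hinv, hD]
    have h1 : LbarMat N a = Pmat N * Matrix.diagonal (lam N a) * (Pmat N)ᵀ := by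
      calc LbarMat N a = LbarMat N a * (Pmat N * (Pmat N)ᵀ) := by
            rw [hPPt, Matrix.mul_one]
        _ = (LbarMat N a * Pmat N) * (Pmat N)ᵀ := by rw [Matrix.mul_assoc]
        _ = Pmat N * Matrix.diagonal (lam N a) * (Pmat N)ᵀ := by rw [Lmul N a hN]
    rw [h1, mul_smul_comm, smul_mul_assoc]
  rw [hL, Matrix.exp_conj _ _ hunit, Matrix.exp_diagonal, hinv]
  rw [Matrix.mul_apply]
  apply Finset.sum_congr rfl
  intro k _
  rw [Matrix.mul_diagonal, Matrix.transpose_apply]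
  rw [Pi.coe_exp, ← Real.exp_eq_exp_ℝ]
  ring

/-! ### Analytic bounds -/

lemma lam_zero (N : ℕ) (a : ℝ) : lam N a 0 = 0 := by
  simp [lam]

lemma gcoef_sq_zero (N : ℕ) : (gcoef N 0)^2 = 1/((N:ℝ)+1) := by
  have h : ((0 : Fin (N+1)):ℕ) = 0 := rfl
  rw [gcoef, if_pos h, sq, Real.mul_self_sqrt (by positivity)]

lemma gcoef_sq_ne (N : ℕ) (k : Fin (N+1)) (hk : (k:ℕ) ≠ 0) : (gcoef N k)^2 = 2/((N:ℝ)+1) := by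
  simp only [gcoef, if_neg hk]
  rw [sq, Real.mul_self_sqrt (by positivity)]

set_option maxHeartbeats 1000000 in
/-- Discrete dispersion bound: `t·λ_k ≤ 1 − 2√β·k` with `β = a t / 2`. -/
lemma lam_bound (N : ℕ) (a t : ℝ) (hN : 2 ≤ N) (ha : 0 < a) (ht : 0 < t)
    (k : Fin (N+1)) (hk : (k:ℕ) ≠ 0) :
    t * lam N a k ≤ 1 - 2 * Real.sqrt (a*t/2) * ((k:ℕ):ℝ) := by
  set v : ℝ := ((k:ℕ):ℝ) * (π/(((N+1:ℕ)):ℝ)) with hv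
  have hNpos : (0:ℝ) < (N:ℝ)+1 := by positivity
  have hk1 : (1:ℝ) ≤ ((k:ℕ):ℝ) := by exact_mod_cast Nat.one_le_iff_ne_zero.mpr hk
  have hkN : ((k:ℕ):ℝ) ≤ (N:ℝ)+1 := by
    have := k.isLt; exact_mod_cast Nat.le_of_lt_succ (by omega)
  have hvpos : 0 ≤ v := by
    rw [hv]; positivity
  have hvle : v ≤ π := by
    calc v = ((k:ℕ):ℝ) * (π/((N:ℝ)+1)) := by rw [hv]; push_cast; ring
      _ ≤ ((N:ℝ)+1) * (π/((N:ℝ)+1)) := by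
          apply mul_le_mul_of_nonneg_right hkN
          have := Real.pi_pos; positivity
      _ = π := by field_simp
  have hcos : Real.cos v = 1 - 2 * Real.sin (v/2)^2 := by
    rw [show v = 2*(v/2) by ring, Real.cos_two_mul]
    have := Real.sin_sq_add_cos_sq (v/2)
    rw [show 2*(v/2)/2 = v/2 by ring]
    linarith
  have hsin : 2/π * (v/2) ≤ Real.sin (v/2) :=
    Real.mul_le_sin (by linarith) (by linarith)
  have hsin0 : 0 ≤ 2/π * (v/2) := by
    have := Real.pi_pos; positivity
  have hsq : (2/π * (v/2))^2 ≤ Real.sin (v/2)^2 := by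
    exact pow_le_pow_left₀ hsin0 hsin 2
  have hone_cos : 2 * (v/π)^2 ≤ 1 - Real.cos v := by
    rw [hcos]
    have : (2/π * (v/2))^2 = (v/π)^2 := by
      field_simp
    nlinarith
  have hvpi : v/π = ((k:ℕ):ℝ)/((N:ℝ)+1) := by
    rw [hv]
    push_cast
    field_simp [Real.pi_ne_zero]
  have hstep1 : t * lam N a k ≤ -(a*t/2) * ((k:ℕ):ℝ)^2 := by
    simp only [lam, ← hv]
    have hNsq : ((N:ℝ)+1)^2 ≤ 4 * (N:ℝ)^2 := by
      have : (2:ℝ) ≤ (N:ℝ) := by exact_mod_cast hN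
      nlinarith
    have h2 : 2 * (((k:ℕ):ℝ)/((N:ℝ)+1))^2 ≤ 1 - Real.cos v := by
      rw [← hvpi]; exact hone_cos
    have h3 : t * (-(a*(N:ℝ)^2) * (1 - Real.cos v))
        ≤ t * (-(a*(N:ℝ)^2) * (2 * (((k:ℕ):ℝ)/((N:ℝ)+1))^2)) := by
      have hc : 0 ≤ t * (a*(N:ℝ)^2) := by positivity
      nlinarith [mul_nonneg hc (sub_nonneg.mpr h2)]
    refine h3.trans ?_
    rw [div_pow]
    rw [show t * (-(a*(N:ℝ)^2) * (2 * (((k:ℕ):ℝ)^2/((N:ℝ)+1)^2)))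
        = -(2*a*t*(N:ℝ)^2/((N:ℝ)+1)^2) * ((k:ℕ):ℝ)^2 by ring]
    have h4 : a*t/2 ≤ 2*a*t*(N:ℝ)^2/((N:ℝ)+1)^2 := by
      rw [div_le_div_iff₀ (by norm_num) (by positivity)]
      nlinarith [mul_pos ha ht]
    have h5 := mul_le_mul_of_nonneg_right h4 (sq_nonneg ((k:ℕ):ℝ))
    linarith
  refine hstep1.trans ?_
  have hb : 0 ≤ a*t/2 := by positivity
  have hsq2 : Real.sqrt (a*t/2)^2 = a*t/2 := Real.sq_sqrt hb
  nlinarith [sq_nonneg (Real.sqrt (a*t/2) * ((k:ℕ):ℝ) - 1)]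

lemma sum_exp_le (N : ℕ) (a t : ℝ) (hN : 2 ≤ N) (ha : 0 < a) (ht : 0 < t) :
    ∑ k ∈ Finset.univ.erase (0 : Fin (N+1)), Real.exp (t * lam N a k)
      ≤ Real.exp 1 / (2*Real.sqrt (a*t/2)) := by
  set sβ : ℝ := Real.sqrt (a*t/2) with hsβ
  have hsβpos : 0 < sβ := Real.sqrt_pos.mpr (by positivity)
  set q : ℝ := Real.exp (-(2*sβ)) with hq
  have hq0 : 0 < q := Real.exp_pos _
  have hq1 : q < 1 := by
    rw [hq, ← Real.exp_zero]
    apply Real.exp_lt_exp.mpr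
    linarith
  have hterm : ∀ k ∈ Finset.univ.erase (0 : Fin (N+1)),
      Real.exp (t * lam N a k) ≤ Real.exp 1 * q^(k:ℕ) := by
    intro k hk
    have hkv : (k:ℕ) ≠ 0 := by
      intro h
      exact (Finset.mem_erase.mp hk).1 (Fin.ext h)
    have h1 := lam_bound N a t hN ha ht k hkv
    calc Real.exp (t * lam N a k) ≤ Real.exp (1 - 2*sβ*((k:ℕ):ℝ)) := Real.exp_le_exp.mpr h1
      _ = Real.exp 1 * q^(k:ℕ) := by
          rw [hq, ← Real.exp_nat_mul, ← Real.exp_add]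
          congr 1
          ring
  have hgeom : ∑ k ∈ Finset.univ.erase (0 : Fin (N+1)), q^(k:ℕ) ≤ q/(1-q) := by
    rw [Finset.sum_erase_eq_sub (Finset.mem_univ _)]
    have h2 : ∑ k : Fin (N+1), q^(k:ℕ) = ∑ i ∈ Finset.range (N+1), q^i :=
      Fin.sum_univ_eq_sum_range (fun i => q^i) (N+1)
    rw [h2, geom_sum_eq (ne_of_lt hq1)]
    have hq1' : 0 < 1 - q := by linarith
    have h3 : (q^(N+1) - 1)/(q-1) = (1 - q^(N+1))/(1-q) := by
      rw [div_eq_div_iff (by linarith) (by linarith)]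
      ring
    rw [h3]
    have h4 : (1 - q^(N+1))/(1-q) ≤ 1/(1-q) := by
      rw [div_le_div_iff₀ hq1' hq1']
      nlinarith [pow_nonneg hq0.le (N+1)]
    have h5 : q^((0:Fin (N+1)):ℕ) = 1 := by norm_num
    have h6 : 1/(1-q) - 1 = q/(1-q) := by field_simp; ring
    rw [h5]
    linarith
  have hq1' : 0 < 1 - q := by linarith
  have hdiv : q/(1-q) ≤ 1/(2*sβ) := by
    rw [div_le_div_iff₀ hq1' (by positivity)]
    have he : q * Real.exp (2*sβ) = 1 := by
      rw [hq, ← Real.exp_add]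
      simp
    have hle := Real.add_one_le_exp (2*sβ)
    nlinarith [hq0.le]
  calc ∑ k ∈ Finset.univ.erase (0 : Fin (N+1)), Real.exp (t * lam N a k)
      ≤ ∑ k ∈ Finset.univ.erase (0 : Fin (N+1)), Real.exp 1 * q^(k:ℕ) :=
        Finset.sum_le_sum hterm
    _ = Real.exp 1 * ∑ k ∈ Finset.univ.erase (0 : Fin (N+1)), q^(k:ℕ) := by
        rw [Finset.mul_sum]
    _ ≤ Real.exp 1 * (q/(1-q)) :=
        mul_le_mul_of_nonneg_left hgeom (Real.exp_nonneg 1)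
    _ ≤ Real.exp 1 * (1/(2*sβ)) :=
        mul_le_mul_of_nonneg_left hdiv (Real.exp_nonneg 1)
    _ = Real.exp 1 / (2*sβ) := by ring

lemma entry_le (N : ℕ) (a t : ℝ) (hN : 2 ≤ N) (ha : 0 < a) (ht : 0 < t)
    (x y : Fin (N+1)) :
    NormedSpace.exp (t • LbarMat N a) x y
      ≤ 1/((N:ℝ)+1) + 2/((N:ℝ)+1) * (Real.exp 1 / (2*Real.sqrt (a*t/2))) := by
  rw [exp_entries N a t hN x y]
  have hterm : ∀ k : Fin (N+1),
      Real.exp (t * lam N a k) * (Pmat N x k * Pmat N y k)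
        ≤ Real.exp (t * lam N a k) * (gcoef N k)^2 := by
    intro k
    apply mul_le_mul_of_nonneg_left ?_ (Real.exp_nonneg _)
    simp only [Pmat, Matrix.of_apply]
    set c1 := Real.cos ((((x:ℕ):ℝ) + 1/2) * (((k:ℕ):ℝ) * (π/(((N+1:ℕ)):ℝ))))
    set c2 := Real.cos ((((y:ℕ):ℝ) + 1/2) * (((k:ℕ):ℝ) * (π/(((N+1:ℕ)):ℝ))))
    have h1 : c1 ≤ 1 := Real.cos_le_one _
    have h2 : -1 ≤ c1 := Real.neg_one_le_cos _
    have h3 : c2 ≤ 1 := Real.cos_le_one _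
    have h4 : -1 ≤ c2 := Real.neg_one_le_cos _
    have h5 : c1 * c2 ≤ 1 := by nlinarith
    nlinarith [sq_nonneg (gcoef N k)]
  calc ∑ k : Fin (N+1), Real.exp (t * lam N a k) * (Pmat N x k * Pmat N y k)
      ≤ ∑ k : Fin (N+1), Real.exp (t * lam N a k) * (gcoef N k)^2 :=
        Finset.sum_le_sum (fun k _ => hterm k)
    _ = Real.exp (t * lam N a 0) * (gcoef N 0)^2
        + ∑ k ∈ Finset.univ.erase (0 : Fin (N+1)),
            Real.exp (t * lam N a k) * (gcoef N k)^2 :=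
        (Finset.add_sum_erase _ _ (Finset.mem_univ 0)).symm
    _ = 1/((N:ℝ)+1) + ∑ k ∈ Finset.univ.erase (0 : Fin (N+1)),
            Real.exp (t * lam N a k) * (2/((N:ℝ)+1)) := by
        rw [lam_zero, gcoef_sq_zero, mul_zero, Real.exp_zero, one_mul]
        congr 1
        apply Finset.sum_congr rfl
        intro k hk
        rw [gcoef_sq_ne N k (fun h => (Finset.mem_erase.mp hk).1 (Fin.ext h))]
    _ = 1/((N:ℝ)+1) + 2/((N:ℝ)+1)
          * ∑ k ∈ Finset.univ.erase (0 : Fin (N+1)), Real.exp (t * lam N a k) := by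
        rw [← Finset.sum_mul]
        ring
    _ ≤ 1/((N:ℝ)+1) + 2/((N:ℝ)+1) * (Real.exp 1 / (2*Real.sqrt (a*t/2))) := by
        have h := sum_exp_le N a t hN ha ht
        have hpos : (0:ℝ) ≤ 2/((N:ℝ)+1) := by positivity
        nlinarith [mul_le_mul_of_nonneg_left h hpos]

/-! ### Nonnegativity -/

lemma pow_entry_nonneg {n : ℕ} (M : Matrix (Fin n) (Fin n) ℝ) (h : ∀ i j, 0 ≤ M i j) :
    ∀ (k : ℕ) (i j : Fin n), 0 ≤ (M^k) i j := by
  intro k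
  induction k with
  | zero =>
    intro i j
    rw [pow_zero, Matrix.one_apply]
    split <;> norm_num
  | succ k ih =>
    intro i j
    rw [pow_succ, Matrix.mul_apply]
    exact Finset.sum_nonneg fun l _ => mul_nonneg (ih i l) (h l j)

lemma exp_hasSum {n : ℕ} (M : Matrix (Fin n) (Fin n) ℝ) :
    HasSum (fun k : ℕ => ((k.factorial:ℝ)⁻¹ : ℝ) • M ^ k) (NormedSpace.exp M) := by
  letI : SeminormedRing (Matrix (Fin n) (Fin n) ℝ) := Matrix.linftyOpSemiNormedRing
  letI : NormedRing (Matrix (Fin n) (Fin n) ℝ) := Matrix.linftyOpNormedRing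
  letI : NormedAlgebra ℝ (Matrix (Fin n) (Fin n) ℝ) := Matrix.linftyOpNormedAlgebra
  exact NormedSpace.exp_series_hasSum_exp' M

lemma exp_entry_nonneg {n : ℕ} (M : Matrix (Fin n) (Fin n) ℝ) (h : ∀ i j, 0 ≤ M i j)
    (i j : Fin n) : 0 ≤ NormedSpace.exp M i j := by
  have hs := (exp_hasSum M).tendsto_sum_nat
  have hcont : Continuous fun A : Matrix (Fin n) (Fin n) ℝ => A i j :=
    (continuous_apply j).comp (continuous_apply i)
  have ht2 := (hcont.tendsto _).comp hs
  refine ge_of_tendsto' ht2 (fun K => ?_)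
  simp only [Function.comp_apply]
  rw [Matrix.sum_apply]
  refine Finset.sum_nonneg fun k _ => ?_
  rw [Matrix.smul_apply, smul_eq_mul]
  exact mul_nonneg (by positivity) (pow_entry_nonneg M h k i j)

lemma shift_nonneg (N : ℕ) (a t : ℝ) (hN : 2 ≤ N) (ha : 0 ≤ a) (ht : 0 ≤ t)
    (x y : Fin (N+1)) :
    0 ≤ (t • LbarMat N a
        + (t*(a*(N:ℝ)^2)) • (1:Matrix (Fin (N+1)) (Fin (N+1)) ℝ)) x y := by
  have hone : ((1:Matrix (Fin (N+1)) (Fin (N+1)) ℝ)) x y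
      = (if ((x:ℕ):ℤ) = ((y:ℕ):ℤ) then (1:ℝ) else 0) := by
    rw [Matrix.one_apply]
    refine if_congr ?_ rfl rfl
    constructor
    · rintro rfl; rfl
    · intro hh; exact Fin.ext (by exact_mod_cast hh)
  simp only [Matrix.add_apply, Matrix.smul_apply, smul_eq_mul, hone]
  simp only [LbarMat, LbarAct, Matrix.of_apply]
  have hNN : (0:ℝ) ≤ t*(a*(N:ℝ)^2) := by positivity
  have hs : (0:ℝ) ≤ t*(a*(N:ℝ)^2/2) := by positivity
  split_ifs <;> first
    | (exfalso; omega)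
    | nlinarith [hNN, hs]

lemma exp_nonneg_total (N : ℕ) (a t : ℝ) (hN : 2 ≤ N) (ha : 0 ≤ a) (ht : 0 ≤ t)
    (x y : Fin (N+1)) :
    0 ≤ NormedSpace.exp (t • LbarMat N a) x y := by
  set μ : ℝ := t*(a*(N:ℝ)^2) with hμ
  set M : Matrix (Fin (N+1)) (Fin (N+1)) ℝ
    := t • LbarMat N a + μ • (1:Matrix (Fin (N+1)) (Fin (N+1)) ℝ) with hM
  have hdec : t • LbarMat N a = (-μ) • (1:Matrix (Fin (N+1)) (Fin (N+1)) ℝ) + M := by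
    rw [hM, neg_smul]
    abel
  rw [hdec, Matrix.exp_add_of_commute _ _ (Commute.smul_left (Commute.one_left M) (-μ))]
  have h1 : NormedSpace.exp ((-μ) • (1:Matrix (Fin (N+1)) (Fin (N+1)) ℝ))
      = Matrix.diagonal (fun _ => Real.exp (-μ)) := by
    have h2 : (NormedSpace.exp (fun _ : Fin (N+1) => -μ) : Fin (N+1) → ℝ)
        = fun _ => Real.exp (-μ) := by
      funext i
      rw [Pi.coe_exp, ← Real.exp_eq_exp_ℝ]
    rw [Matrix.smul_one_eq_diagonal, Matrix.exp_diagonal, h2]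
  rw [h1, Matrix.diagonal_mul]
  exact mul_nonneg (Real.exp_nonneg _)
    (exp_entry_nonneg M (fun i j => shift_nonneg N a t hN ha ht i j) x y)

end NashAux

/-- The nearest-neighbor Neumann heat kernel `Ū^{N,0}` with diffusivity
`ᾱ = Σ_k k²·α̃_k` is nonnegative and bounded above by
`C·(N⁻¹ + N⁻¹(T−S)^{−1/2})` for a constant `C` depending only on `m, c, C₀`. -/
theorem nearest_neighbor_neumann_kernel_nash_bound
    (m : ℕ) (c C₀ : ℝ) (hm : 1 ≤ m) (hc : 0 < c) (hC₀ : 0 < C₀) :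
    ∃ C : ℝ, 0 < C ∧
      ∀ (N : ℕ) (α : ℕ → ℝ), 2 ≤ N → 2 * m ≤ N →
        (∀ k ∈ Finset.Icc 1 m, 0 ≤ α k) → c ≤ α 1 →
        (∑ k ∈ Finset.Icc 1 m, α k) ≤ C₀ →
        ∀ S T : ℝ, 0 ≤ S → S < T →
          ∀ x ∈ Finset.Icc (0 : ℤ) (N : ℤ), ∀ y ∈ Finset.Icc (0 : ℤ) (N : ℤ),
            0 ≤ kerBar0 N (∑ k ∈ Finset.Icc 1 m, (k : ℝ) ^ 2 * α k) S T x y ∧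
            kerBar0 N (∑ k ∈ Finset.Icc 1 m, (k : ℝ) ^ 2 * α k) S T x y ≤
              C * ((N : ℝ)⁻¹ + (N : ℝ)⁻¹ * (T - S) ^ (-(1 / 2 : ℝ))) := by
  refine ⟨1 + 3 * Real.sqrt (2/c), by positivity, ?_⟩
  intro N α hN2 h2m hα hα1 hαsum S T hS hST x hx y hy
  set a : ℝ := ∑ k ∈ Finset.Icc 1 m, (k : ℝ) ^ 2 * α k with ha
  have ha_lb : c ≤ a := by
    have h1mem : 1 ∈ Finset.Icc 1 m := Finset.mem_Icc.mpr ⟨le_refl 1, hm⟩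
    have hterm : ∀ k ∈ Finset.Icc 1 m, 0 ≤ (k:ℝ)^2 * α k :=
      fun k hk => mul_nonneg (by positivity) (hα k hk)
    calc c ≤ α 1 := hα1
      _ ≤ a := by
          have h := Finset.single_le_sum hterm h1mem
          rw [ha]
          simpa using h
  have ha_pos : 0 < a := lt_of_lt_of_le hc ha_lb
  have ht : 0 < T - S := sub_pos.mpr hST
  obtain ⟨hx0, hxN⟩ := Finset.mem_Icc.mp hx
  obtain ⟨hy0, hyN⟩ := Finset.mem_Icc.mp hy
  rw [kerBar0, dif_pos ⟨hx0, hxN, hy0, hyN⟩]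
  constructor
  · exact NashAux.exp_nonneg_total N a (T-S) hN2 ha_pos.le ht.le _ _
  · have h := NashAux.entry_le N a (T-S) hN2 ha_pos ht
      ⟨x.toNat, by omega⟩ ⟨y.toNat, by omega⟩
    refine h.trans ?_
    set st : ℝ := Real.sqrt (T-S) with hst
    have hstpos : 0 < st := Real.sqrt_pos.mpr ht
    have hrpow : (T - S) ^ (-(1 / 2 : ℝ)) = st⁻¹ := by
      rw [Real.rpow_neg ht.le, hst, Real.sqrt_eq_rpow]
    rw [hrpow]
    set sβ : ℝ := Real.sqrt (a*(T-S)/2) with hsβ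
    have hsβpos : 0 < sβ := Real.sqrt_pos.mpr (by positivity)
    have hc2pos : 0 < Real.sqrt (c/2) := Real.sqrt_pos.mpr (by positivity)
    have hNpos : (0:ℝ) < N := by
      have : (2:ℝ) ≤ (N:ℝ) := by exact_mod_cast hN2
      linarith
    have h_sβ_lb : Real.sqrt (c/2) * st ≤ sβ := by
      rw [hsβ, hst, ← Real.sqrt_mul (by positivity) (T-S)]
      apply Real.sqrt_le_sqrt
      nlinarith
    have hexp3 : Real.exp 1 ≤ 3 :=
      (Real.exp_one_lt_d9.le).trans (by norm_num)
    have e1 : 2/((N:ℝ)+1) * (Real.exp 1 / (2*sβ)) = Real.exp 1 / (((N:ℝ)+1)*sβ) := by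
      field_simp
    have h2c : Real.sqrt (2/c) = (Real.sqrt (c/2))⁻¹ := by
      rw [show (2/c : ℝ) = (c/2)⁻¹ by rw [inv_div], Real.sqrt_inv]
    have hb1 : Real.exp 1 / (((N:ℝ)+1)*sβ) ≤ 3 / (((N:ℝ)+1)*(Real.sqrt (c/2)*st)) := by
      apply div_le_div₀ (by norm_num) hexp3 (by positivity)
      apply mul_le_mul_of_nonneg_left h_sβ_lb (by positivity)
    have hb2 : 3 / (((N:ℝ)+1)*(Real.sqrt (c/2)*st))
        = 3 * Real.sqrt (2/c) * (((N:ℝ)+1)⁻¹ * st⁻¹) := by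
      rw [h2c]
      field_simp
    have hb3 : 3 * Real.sqrt (2/c) * (((N:ℝ)+1)⁻¹ * st⁻¹)
        ≤ 3 * Real.sqrt (2/c) * ((N:ℝ)⁻¹ * st⁻¹) := by
      have hN1 : ((N:ℝ)+1)⁻¹ ≤ (N:ℝ)⁻¹ := by
        apply inv_anti₀ hNpos
        linarith
      apply mul_le_mul_of_nonneg_left ?_ (by positivity)
      apply mul_le_mul_of_nonneg_right hN1 (by positivity)
    have hA : 1/((N:ℝ)+1) ≤ (N:ℝ)⁻¹ := by
      rw [one_div]
      apply inv_anti₀ hNpos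
      linarith
    have hB : 2/((N:ℝ)+1) * (Real.exp 1 / (2*sβ))
        ≤ 3 * Real.sqrt (2/c) * ((N:ℝ)⁻¹ * st⁻¹) := by
      rw [e1]
      exact (hb1.trans_eq hb2).trans hb3
    have hsq2c : 0 ≤ Real.sqrt (2/c) := Real.sqrt_nonneg _
    have hNinv : 0 ≤ (N:ℝ)⁻¹ := by positivity
    have hstinv : 0 ≤ st⁻¹ := by positivity
    nlinarith [mul_nonneg (mul_nonneg hsq2c hNinv) hstinv,
      mul_nonneg hNinv hstinv]
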